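/- Let d ≥ 2, 0 < β < α < 2 with α = 2β. Let B = B(0,1) and define h(y) := ∫_{w ∈ B} |w−y|^{β−d} min(1, δ_B(w)^β/|y−w|^β) · max(1, log(|w−y|/δ_B(y))) dw for y ∈ B, where δ_B(z) = 1 − |z|. Then there exists c = c(d, β) > 0 such that h(y) ≤ c (δ_B(y)^{−β/2} + 1) for all y ∈ B. -/
import Mathlib

open MeasureTheory Metric Set
open scoped ENNReal

lemma aux_rpow_ball (d : ℕ) (hd : 0 < d) {s : ℝ} (hs : -(d:ℝ) < s) (R : ℝ) :
    IntegrableOn (fun x : EuclideanSpace ℝ (Fin d) ↦ ‖x‖ ^ s) (ball 0 R) := by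
  set E := EuclideanSpace ℝ (Fin d)
  have hfr : Module.finrank ℝ E = d := finrank_euclideanSpace_fin
  have hmble : AEStronglyMeasurable (fun x : E ↦ ‖x‖ ^ s) volume :=
    (measurable_norm.pow_const s).aestronglyMeasurable
  have hnn : ∀ x : E, 0 ≤ ‖x‖ ^ s := fun x => Real.rpow_nonneg (norm_nonneg _) _
  rcases le_or_gt 0 s with hs0 | hs0
  · refine Measure.integrableOn_of_bounded measure_ball_lt_top.ne hmble (M := |R| ^ s) ?_
    filter_upwards [ae_restrict_mem measurableSet_ball] with x hx
    rw [Real.norm_of_nonneg (hnn x)]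
    exact Real.rpow_le_rpow (norm_nonneg _)
      ((mem_ball_zero_iff.mp hx).le.trans (le_abs_self R)) hs0
  · refine ⟨hmble.restrict, ?_⟩
    rw [hasFiniteIntegral_iff_ofReal (ae_of_all _ hnn),
      lintegral_eq_lintegral_meas_le _ (ae_of_all _ hnn) hmble.aemeasurable.restrict]
    set μ := (volume : Measure E) with hμ
    have hlt : s⁻¹ * (d:ℝ) < -1 := by
      have hinv : s⁻¹ < 0 := inv_lt_zero.mpr hs0
      have h2 : s * s⁻¹ < -(d:ℝ) * s⁻¹ := mul_lt_mul_of_neg_right hs hinv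
      rw [mul_inv_cancel₀ hs0.ne] at h2
      nlinarith
    have h1 : (∫⁻ t in Ioc (0:ℝ) 1, (μ.restrict (ball 0 R)) {a : E | t ≤ ‖a‖ ^ s}) < ∞ := by
      calc (∫⁻ t in Ioc (0:ℝ) 1, (μ.restrict (ball 0 R)) {a : E | t ≤ ‖a‖ ^ s})
          ≤ ∫⁻ _ in Ioc (0:ℝ) 1, μ (ball (0:E) R) :=
            lintegral_mono fun t => le_trans (measure_mono (subset_univ _))
              (le_of_eq (Measure.restrict_apply_univ _))
        _ = μ (ball (0:E) R) * volume (Ioc (0:ℝ) 1) := setLIntegral_const _ _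
        _ < ∞ := ENNReal.mul_lt_top measure_ball_lt_top (by simp [Real.volume_Ioc])
    have key : ∀ t ∈ Ioi (1:ℝ), (μ.restrict (ball 0 R)) {a : E | t ≤ ‖a‖ ^ s}
        ≤ ENNReal.ofReal (t ^ (s⁻¹ * d)) * μ (ball (0:E) 1) := by
      intro t ht
      have ht0 : (0:ℝ) < t := lt_trans one_pos ht
      have hsub : {a : E | t ≤ ‖a‖ ^ s} ⊆ closedBall 0 (t ^ s⁻¹) := by
        intro a ha
        simp only [mem_setOf_eq] at ha
        have hane : (0:ℝ) < ‖a‖ := by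
          rcases eq_or_lt_of_le (norm_nonneg a) with h | h
          · exfalso; rw [← h, Real.zero_rpow hs0.ne] at ha; linarith
          · exact h
        rw [mem_closedBall_zero_iff]
        exact (Real.le_rpow_inv_iff_of_neg hane ht0 hs0).mpr ha
      calc (μ.restrict (ball 0 R)) {a : E | t ≤ ‖a‖ ^ s}
          ≤ μ {a : E | t ≤ ‖a‖ ^ s} := Measure.restrict_le_self _
        _ ≤ μ (closedBall 0 (t ^ s⁻¹)) := measure_mono hsub
        _ = ENNReal.ofReal ((t ^ s⁻¹) ^ Module.finrank ℝ E) * μ (ball 0 1) :=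
            μ.addHaar_closedBall 0 (Real.rpow_nonneg ht0.le _)
        _ = ENNReal.ofReal (t ^ (s⁻¹ * d)) * μ (ball 0 1) := by
            rw [hfr, ← Real.rpow_natCast (t ^ s⁻¹) d, ← Real.rpow_mul ht0.le]
    have h2 : (∫⁻ t in Ioi (1:ℝ), (μ.restrict (ball 0 R)) {a : E | t ≤ ‖a‖ ^ s}) < ∞ := by
      calc (∫⁻ t in Ioi (1:ℝ), (μ.restrict (ball 0 R)) {a : E | t ≤ ‖a‖ ^ s})
          ≤ ∫⁻ t in Ioi (1:ℝ), ENNReal.ofReal (t ^ (s⁻¹ * d)) * μ (ball (0:E) 1) :=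
            setLIntegral_mono' measurableSet_Ioi key
        _ = (∫⁻ t in Ioi (1:ℝ), ENNReal.ofReal (t ^ (s⁻¹ * d))) * μ (ball (0:E) 1) :=
            lintegral_mul_const' _ _ measure_ball_lt_top.ne
        _ < ∞ := ENNReal.mul_lt_top
            ((integrableOn_Ioi_rpow_of_lt hlt one_pos).setLIntegral_lt_top)
            measure_ball_lt_top
    calc (∫⁻ t in Ioi (0:ℝ), (μ.restrict (ball 0 R)) {a : E | t ≤ ‖a‖ ^ s})
        ≤ ∫⁻ t in Ioc (0:ℝ) 1 ∪ Ioi 1, (μ.restrict (ball 0 R)) {a : E | t ≤ ‖a‖ ^ s} :=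
          lintegral_mono_set Ioi_subset_Ioc_union_Ioi
      _ ≤ (∫⁻ t in Ioc (0:ℝ) 1, (μ.restrict (ball 0 R)) {a : E | t ≤ ‖a‖ ^ s})
          + ∫⁻ t in Ioi (1:ℝ), (μ.restrict (ball 0 R)) {a : E | t ≤ ‖a‖ ^ s} :=
          lintegral_union_le _ _ _
      _ < ∞ := ENNReal.add_lt_top.2 ⟨h1, h2⟩

lemma aux_trans (d : ℕ) (hd : 0 < d) {s : ℝ} (hs : -(d:ℝ) < s)
    (y : EuclideanSpace ℝ (Fin d)) (R : ℝ) :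
    IntegrableOn (fun w : EuclideanSpace ℝ (Fin d) ↦ ‖w - y‖ ^ s) (ball y R) := by
  let E := EuclideanSpace ℝ (Fin d)
  have hmp : MeasurePreserving (fun x : E => x + y) volume volume :=
    measurePreserving_add_right volume y
  have hpre : (fun x : E => x + y) ⁻¹' (ball y R) = ball 0 R := by
    ext x
    simp [mem_ball, dist_eq_norm]
  have h2 : MeasurePreserving (fun x : E => x + y)
      (volume.restrict (ball 0 R)) (volume.restrict (ball y R)) := by
    have := hmp.restrict_preimage (measurableSet_ball (x := y) (ε := R))
    rwa [hpre] at this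
  have hemb : MeasurableEmbedding (fun x : E => x + y) :=
    (Homeomorph.addRight y).measurableEmbedding
  rw [IntegrableOn, ← h2.integrable_comp_emb hemb]
  have : ((fun w : E => ‖w - y‖ ^ s) ∘ fun x : E => x + y) = fun x : E => ‖x‖ ^ s := by
    ext x; simp
  rw [this]
  exact aux_rpow_ball d hd hs R

theorem stmt_10 (d : ℕ) (hd : 2 ≤ d) (β : ℝ) (hβ : 0 < β) (hβ1 : 2 * β < 2) :
    ∃ c : ℝ, 0 < c ∧ ∀ y : EuclideanSpace ℝ (Fin d), ‖y‖ < 1 →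
      (∫ w in ball (0 : EuclideanSpace ℝ (Fin d)) 1,
          ‖w - y‖ ^ (β - d) * min 1 ((1 - ‖w‖) ^ β / ‖y - w‖ ^ β) *
            max 1 (Real.log (‖w - y‖ / (1 - ‖y‖))))
        ≤ c * ((1 - ‖y‖) ^ (-β/2) + 1) := by
  have hd0 : 0 < d := by omega
  have hβd : -(d:ℝ) < β - d := by linarith
  set K : ℝ := ∫ u in ball (0 : EuclideanSpace ℝ (Fin d)) 2, ‖u‖ ^ (β - d) with hKdef
  have hK0 : 0 ≤ K :=
    integral_nonneg fun u => Real.rpow_nonneg (norm_nonneg _) _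
  have hlog2 : 0 ≤ Real.log 2 := Real.log_nonneg one_le_two
  have hC0 : 0 < Real.log 2 + 2 / β + 1 := by positivity
  refine ⟨(K + 1) * (Real.log 2 + 2 / β + 1), by positivity, fun y hy => ?_⟩
  set δ : ℝ := 1 - ‖y‖ with hδdef
  have hδ : 0 < δ := by simp only [hδdef]; linarith
  have hδ1 : δ ≤ 1 := by simp only [hδdef]; linarith [norm_nonneg y]
  set M : ℝ := max 1 (Real.log (2 / δ)) with hMdef
  have hM1 : (1:ℝ) ≤ M := le_max_left _ _
  have hM0 : (0:ℝ) ≤ M := zero_le_one.trans hM1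
  have hsub : ball (0 : EuclideanSpace ℝ (Fin d)) 1 ⊆ ball y 2 := by
    intro w hw
    rw [mem_ball_iff_norm]
    have := norm_sub_le w y
    have hw' := mem_ball_zero_iff.mp hw
    linarith
  have hI2 : IntegrableOn (fun w : EuclideanSpace ℝ (Fin d) ↦ ‖w - y‖ ^ (β - d)) (ball y 2) :=
    aux_trans d hd0 hβd y 2
  have hI1 : IntegrableOn (fun w : EuclideanSpace ℝ (Fin d) ↦ ‖w - y‖ ^ (β - d))
      (ball (0 : EuclideanSpace ℝ (Fin d)) 1) := hI2.mono_set hsub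
  -- pointwise bounds
  have hnn : 0 ≤ᵐ[volume.restrict (ball (0 : EuclideanSpace ℝ (Fin d)) 1)]
      fun w => ‖w - y‖ ^ (β - d) * min 1 ((1 - ‖w‖) ^ β / ‖y - w‖ ^ β) *
        max 1 (Real.log (‖w - y‖ / (1 - ‖y‖))) := by
    filter_upwards [ae_restrict_mem measurableSet_ball] with w hw
    have hw' := mem_ball_zero_iff.mp hw
    have h1 : (0:ℝ) ≤ ‖w - y‖ ^ (β - d) := Real.rpow_nonneg (norm_nonneg _) _
    have h2 : (0:ℝ) ≤ min 1 ((1 - ‖w‖) ^ β / ‖y - w‖ ^ β) :=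
      le_min zero_le_one (div_nonneg (Real.rpow_nonneg (by linarith) _)
        (Real.rpow_nonneg (norm_nonneg _) _))
    have h3 : (0:ℝ) ≤ max 1 (Real.log (‖w - y‖ / (1 - ‖y‖))) :=
      zero_le_one.trans (le_max_left _ _)
    positivity
  have hpt : (fun w => ‖w - y‖ ^ (β - d) * min 1 ((1 - ‖w‖) ^ β / ‖y - w‖ ^ β) *
        max 1 (Real.log (‖w - y‖ / (1 - ‖y‖))))
      ≤ᵐ[volume.restrict (ball (0 : EuclideanSpace ℝ (Fin d)) 1)]
      fun w => M * ‖w - y‖ ^ (β - d) := by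
    filter_upwards [ae_restrict_mem measurableSet_ball] with w hw
    have hw' := mem_ball_zero_iff.mp hw
    set A : ℝ := ‖w - y‖ ^ (β - d) with hA
    have hA0 : 0 ≤ A := Real.rpow_nonneg (norm_nonneg _) _
    have hm1 : min 1 ((1 - ‖w‖) ^ β / ‖y - w‖ ^ β) ≤ 1 := min_le_left _ _
    have hm0 : (0:ℝ) ≤ min 1 ((1 - ‖w‖) ^ β / ‖y - w‖ ^ β) :=
      le_min zero_le_one (div_nonneg (Real.rpow_nonneg (by linarith) _)
        (Real.rpow_nonneg (norm_nonneg _) _))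
    have hL0 : (0:ℝ) ≤ max 1 (Real.log (‖w - y‖ / (1 - ‖y‖))) :=
      zero_le_one.trans (le_max_left _ _)
    have hLM : max 1 (Real.log (‖w - y‖ / (1 - ‖y‖))) ≤ M := by
      rw [hMdef]
      refine max_le_max le_rfl ?_
      rw [← hδdef]
      have hwy2 : ‖w - y‖ ≤ 2 := by
        have := norm_sub_le w y
        linarith
      rcases eq_or_lt_of_le (norm_nonneg (w - y)) with h | h
      · rw [← h, zero_div, Real.log_zero]
        apply Real.log_nonneg
        rw [le_div_iff₀ hδ]
        linarith
      · exact Real.log_le_log (div_pos h hδ) (by gcongr)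
    calc A * min 1 ((1 - ‖w‖) ^ β / ‖y - w‖ ^ β) * max 1 (Real.log (‖w - y‖ / (1 - ‖y‖)))
        ≤ A * M := mul_le_mul (mul_le_of_le_one_right hA0 hm1) hLM hL0 hA0
      _ = M * A := mul_comm _ _
  -- chain of inequalities
  have step1 : (∫ w in ball (0 : EuclideanSpace ℝ (Fin d)) 1,
        ‖w - y‖ ^ (β - d) * min 1 ((1 - ‖w‖) ^ β / ‖y - w‖ ^ β) *
          max 1 (Real.log (‖w - y‖ / (1 - ‖y‖))))
      ≤ ∫ w in ball (0 : EuclideanSpace ℝ (Fin d)) 1, M * ‖w - y‖ ^ (β - d) :=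
    integral_mono_of_nonneg hnn (hI1.const_mul M) hpt
  have step2 : (∫ w in ball (0 : EuclideanSpace ℝ (Fin d)) 1, M * ‖w - y‖ ^ (β - d))
      = M * ∫ w in ball (0 : EuclideanSpace ℝ (Fin d)) 1, ‖w - y‖ ^ (β - d) :=
    integral_const_mul M _
  have step3 : (∫ w in ball (0 : EuclideanSpace ℝ (Fin d)) 1, ‖w - y‖ ^ (β - d))
      ≤ ∫ w in ball y 2, ‖w - y‖ ^ (β - d) := by
    refine setIntegral_mono_set hI2 ?_ hsub.eventuallyLE
    exact ae_of_all _ fun w => Real.rpow_nonneg (norm_nonneg _) _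
  have step4 : (∫ w in ball y 2, ‖w - y‖ ^ (β - d)) = K := by
    have hmp : MeasurePreserving (fun x : EuclideanSpace ℝ (Fin d) => x + y)
        volume volume := measurePreserving_add_right volume y
    have hpre : (fun x : EuclideanSpace ℝ (Fin d) => x + y) ⁻¹' (ball y 2) = ball 0 2 := by
      ext x; simp [mem_ball, dist_eq_norm]
    have h2 : MeasurePreserving (fun x : EuclideanSpace ℝ (Fin d) => x + y)
        (volume.restrict (ball 0 2)) (volume.restrict (ball y 2)) := by
      have := hmp.restrict_preimage (measurableSet_ball (x := y) (ε := (2:ℝ)))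
      rwa [hpre] at this
    have hemb : MeasurableEmbedding (fun x : EuclideanSpace ℝ (Fin d) => x + y) :=
      (Homeomorph.addRight y).measurableEmbedding
    have := h2.integral_comp hemb (fun w => ‖w - y‖ ^ (β - d))
    rw [← this, hKdef]
    apply setIntegral_congr_fun measurableSet_ball
    intro x _
    simp
  -- bound on M
  have hδp : (1:ℝ) ≤ δ ^ (-β/2) := by
    rw [neg_div]
    exact Real.one_le_rpow_of_pos_of_le_one_of_nonpos hδ hδ1 (by linarith)
  have hMle : M ≤ (Real.log 2 + 2 / β + 1) * (δ ^ (-β/2) + 1) := by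
    have hδp0 : (0:ℝ) ≤ δ ^ (-β/2) := by linarith
    rw [hMdef]
    have h2β : (0:ℝ) < 2 / β := by positivity
    apply max_le
    · nlinarith [mul_nonneg hlog2 hδp0, mul_nonneg h2β.le hδp0]
    · have hlogdiv : Real.log (2 / δ) = Real.log 2 - Real.log δ :=
        Real.log_div two_ne_zero hδ.ne'
      have hloginv : Real.log δ⁻¹ ≤ (δ⁻¹) ^ (β/2) / (β/2) :=
        Real.log_le_rpow_div (inv_nonneg.mpr hδ.le) (by positivity)
      have hinv : (δ⁻¹) ^ (β/2) = δ ^ (-β/2) := by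
        rw [Real.inv_rpow hδ.le, ← Real.rpow_neg hδ.le, neg_div]
      rw [Real.log_inv] at hloginv
      rw [hinv] at hloginv
      have h5 : -Real.log δ ≤ δ ^ (-β/2) * (2 / β) := by
        rw [div_eq_mul_inv, inv_div] at hloginv
        exact hloginv
      rw [hlogdiv]
      nlinarith [h5, mul_nonneg hlog2 hδp0]
  -- finish
  have hKK : M * K ≤ (K + 1) * (Real.log 2 + 2 / β + 1) * (δ ^ (-β/2) + 1) := by
    have h6 : M * K ≤ ((Real.log 2 + 2 / β + 1) * (δ ^ (-β/2) + 1)) * (K + 1) :=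
      mul_le_mul hMle (by linarith) hK0 (by positivity)
    nlinarith
  calc (∫ w in ball (0 : EuclideanSpace ℝ (Fin d)) 1,
        ‖w - y‖ ^ (β - d) * min 1 ((1 - ‖w‖) ^ β / ‖y - w‖ ^ β) *
          max 1 (Real.log (‖w - y‖ / (1 - ‖y‖))))
      ≤ M * ∫ w in ball (0 : EuclideanSpace ℝ (Fin d)) 1, ‖w - y‖ ^ (β - d) := by
        rw [← step2]; exact step1
    _ ≤ M * ∫ w in ball y 2, ‖w - y‖ ^ (β - d) := mul_le_mul_of_nonneg_left step3 hM0
    _ = M * K := by rw [step4]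
    _ ≤ (K + 1) * (Real.log 2 + 2 / β + 1) * (δ ^ (-β/2) + 1) := hKK
    _ = (K + 1) * (Real.log 2 + 2 / β + 1) * ((1 - ‖y‖) ^ (-β/2) + 1) := by rw [hδdef]
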